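/- arXiv:2308.05529 — 3 statements merged into one kernel-verified Lean document; each statement's English description precedes it below -/
import Mathlib

section
/- Let F(z,w) = (e^{-z^2} - δw, z) with δ > 2 real. If (z₀, w₀) ∈ ℂ² satisfies |Im z₀| < |Re z₀|, |Im w₀| < |Re w₀|, and |Re w₀| > (1+λ)/(δ-1) for some λ > 0, then the first coordinate z₁ = e^{-z₀²} - δw₀ of F(z₀,w₀) satisfies |Re z₁| > |Re w₀| + λ. -/
theorem stmt_3 (δ lam : ℝ) (hδ : 2 < δ) (hlam : 0 < lam) (z₀ w₀ : ℂ)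
    (hz : |z₀.im| < |z₀.re|) (hw : |w₀.im| < |w₀.re|)
    (hre : |w₀.re| > (1 + lam) / (δ - 1)) :
    |(Complex.exp (-z₀ ^ 2) - (δ : ℂ) * w₀).re| > |w₀.re| + lam := by
  set E := Complex.exp (-z₀ ^ 2) with hE
  have hre' : (-z₀ ^ 2).re = z₀.im ^ 2 - z₀.re ^ 2 := by
    simp [Complex.neg_re, Complex.sq_norm, pow_two, Complex.mul_re]
  have hneg : (-z₀ ^ 2).re < 0 := by
    rw [hre']
    have := sq_lt_sq' (neg_lt_of_abs_lt hz) (lt_of_abs_lt hz)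
    rw [sq_abs] at this
    linarith
  have habs : ‖E‖ < 1 := by
    rw [hE, Complex.norm_exp]
    exact Real.exp_lt_one_iff.mpr hneg
  have hEre : |E.re| < 1 := lt_of_le_of_lt (Complex.abs_re_le_norm E) habs
  have hco : (E - (δ : ℂ) * w₀).re = E.re - δ * w₀.re := by
    simp [Complex.sub_re, Complex.mul_re]
  rw [hco]
  have hδ1 : (0:ℝ) < δ - 1 := by linarith
  have key : (δ - 1) * |w₀.re| > 1 + lam := by
    rw [gt_iff_lt, ← div_lt_iff₀' hδ1]; exact hre
  have h1 : |E.re - δ * w₀.re| ≥ |δ * w₀.re| - |E.re| := by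
    have := abs_sub_abs_le_abs_sub (δ * w₀.re) E.re
    rw [abs_sub_comm] at this
    linarith
  have h2 : |δ * w₀.re| = δ * |w₀.re| := by
    rw [abs_mul, abs_of_pos (by linarith : (0:ℝ) < δ)]
  nlinarith [h1, h2, key, hEre]
end

section
/- Let F(z,w) = (e^{-z^2} - δw, z) with δ > 2. If (z₀, w₀) satisfies |Im z₀| < |Re z₀|, |Im w₀| < |Re w₀|, and |Re w₀| > 1/δ, then Re z₁ = Re(e^{-z₀²} - δw₀) has sign opposite to the sign of Re w₀. -/
theorem stmt_4 (δ : ℝ) (hδ : 2 < δ) (z₀ w₀ : ℂ)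
    (hz : |z₀.im| < |z₀.re|) (hw : |w₀.im| < |w₀.re|) :
    (w₀.re > 1 / δ → (Complex.exp (-z₀ ^ 2) - (δ : ℂ) * w₀).re < 0) ∧
      (w₀.re < -(1 / δ) → (Complex.exp (-z₀ ^ 2) - (δ : ℂ) * w₀).re > 0) := by
  have hδ0 : (0:ℝ) < δ := by linarith
  have hre : (-z₀ ^ 2).re < 0 := by
    simp [Complex.neg_re, Complex.sq_norm, pow_two, Complex.mul_re]
    nlinarith [sq_abs z₀.im, sq_abs z₀.re, sq_nonneg (|z₀.im| + |z₀.re|), abs_nonneg z₀.im]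
  have habs : ‖Complex.exp (-z₀ ^ 2)‖ < 1 := by
    rw [Complex.norm_exp]
    exact Real.exp_lt_one_iff.mpr hre
  have h1 : |(Complex.exp (-z₀ ^ 2)).re| < 1 :=
    lt_of_le_of_lt (Complex.abs_re_le_norm _) habs
  have hre2 : (Complex.exp (-z₀ ^ 2) - (δ : ℂ) * w₀).re
      = (Complex.exp (-z₀ ^ 2)).re - δ * w₀.re := by
    simp [Complex.sub_re, Complex.mul_re]
  rw [abs_lt] at h1
  constructor
  · intro h
    rw [hre2]
    have : 1 < δ * w₀.re := by
      rw [gt_iff_lt, div_lt_iff₀ hδ0] at h; linarith [mul_comm δ w₀.re]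
    linarith
  · intro h
    rw [hre2]
    have : δ * w₀.re < -1 := by
      have h2 : 1/δ < -w₀.re := by linarith
      rw [div_lt_iff₀ hδ0] at h2
      nlinarith
    linarith
end

section
/- Let 0 < k < k̃ < 1, δ > 2, and let (z₀, w₀) ∈ ℂ² satisfy |Im z₀| < |Re z₀|, |Im w₀| ≤ k|Re w₀|, and |Re w₀| > 2/(δ(k̃ - k)). Then z₁ = e^{-z₀²} - δw₀ satisfies |Im z₁ / Re z₁| < k̃ (in particular Re z₁ ≠ 0). -/
theorem stmt_5 (k k' δ : ℝ) (hk : 0 < k) (hkk' : k < k') (hk' : k' < 1) (hδ : 2 < δ)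
    (z₀ w₀ : ℂ) (hz : |z₀.im| < |z₀.re|) (hw : |w₀.im| ≤ k * |w₀.re|)
    (hre : |w₀.re| > 2 / (δ * (k' - k))) :
    (Complex.exp (-z₀ ^ 2) - (δ : ℂ) * w₀).re ≠ 0 ∧
      |(Complex.exp (-z₀ ^ 2) - (δ : ℂ) * w₀).im /
          (Complex.exp (-z₀ ^ 2) - (δ : ℂ) * w₀).re| < k' := by
  have hδ0 : (0:ℝ) < δ := by linarith
  have hkk : (0:ℝ) < k' - k := by linarith
  have hdenom : 0 < δ * (k' - k) := mul_pos hδ0 hkk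
  have hx2 : 2 < |w₀.re| * (δ * (k' - k)) := (div_lt_iff₀ hdenom).mp hre
  have habs : ‖Complex.exp (-z₀ ^ 2)‖ < 1 := by
    rw [Complex.norm_exp]
    have h1 : z₀.im ^ 2 < z₀.re ^ 2 := by
      nlinarith [abs_nonneg z₀.im, sq_abs z₀.im, sq_abs z₀.re]
    have h2 : (-z₀ ^ 2).re < 0 := by
      simp only [Complex.neg_re, pow_two, Complex.mul_re]
      nlinarith
    exact Real.exp_lt_one_iff.mpr h2
  have ha : |(Complex.exp (-z₀ ^ 2)).re| < 1 :=
    lt_of_le_of_lt (Complex.abs_re_le_norm _) habs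
  have hb : |(Complex.exp (-z₀ ^ 2)).im| < 1 :=
    lt_of_le_of_lt (Complex.abs_im_le_norm _) habs
  set a := (Complex.exp (-z₀ ^ 2)).re
  set b := (Complex.exp (-z₀ ^ 2)).im
  have hre_eq : (Complex.exp (-z₀ ^ 2) - (δ : ℂ) * w₀).re = a - δ * w₀.re := by
    simp [Complex.sub_re, Complex.mul_re, a]
  have him_eq : (Complex.exp (-z₀ ^ 2) - (δ : ℂ) * w₀).im = b - δ * w₀.im := by
    simp [Complex.sub_im, Complex.mul_im, b]
  have hxnn : 0 ≤ |w₀.re| := abs_nonneg _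
  have hdx : 2 < δ * |w₀.re| := by nlinarith
  have hlow : δ * |w₀.re| - |a| ≤ |a - δ * w₀.re| := by
    have := abs_sub_abs_le_abs_sub (δ * w₀.re) a
    rw [abs_sub_comm] at this
    rw [abs_mul, abs_of_pos hδ0] at this
    linarith
  have hpos : 0 < |a - δ * w₀.re| := by linarith
  have hup : |b - δ * w₀.im| ≤ |b| + δ * |w₀.im| := by
    have := abs_sub (b) (δ * w₀.im)
    rw [abs_mul, abs_of_pos hδ0] at this
    linarith
  constructor
  · rw [hre_eq]
    intro h
    rw [h, abs_zero] at hpos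
    exact lt_irrefl _ hpos
  · rw [hre_eq, him_eq, abs_div, div_lt_iff₀ hpos]
    nlinarith [abs_nonneg b, abs_nonneg w₀.im, abs_nonneg (a - δ * w₀.re)]
end
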